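/- Let U be a nonprincipal ultrafilter on ℕ and let M : ℕ → Type be a family of types each of which is countably infinite. Then the ultraproduct Π_U Mₙ has cardinality 2^ℵ₀ (the cardinality of the continuum). -/

import Mathlib

open Cardinal

/-- Let `U` be a nonprincipal ultrafilter on `ℕ` and let `M : ℕ → Type` be a family of types,
each countably infinite. Then the ultraproduct `Π_U Mₙ` has cardinality `2^ℵ₀`, the cardinality
of the continuum. -/
theorem mk_ultraproduct_of_countably_infinite (U : Ultrafilter ℕ) (hU : ∀ n : ℕ, U ≠ pure n)
    (M : ℕ → Type) (hcount : ∀ n, Countable (M n)) (hinf : ∀ n, Infinite (M n)) :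
    Cardinal.mk ((U : Filter ℕ).Product M) = Cardinal.continuum := by
  apply le_antisymm
  · calc #((U : Filter ℕ).Product M) ≤ #(∀ n, M n) := Cardinal.mk_quotient_le
      _ = Cardinal.prod fun n => #(M n) := (Cardinal.mk_pi M)
      _ = Cardinal.prod fun _ : ℕ => ℵ₀ := by
          congr 1; funext n
          have := hcount n; have := hinf n
          exact Cardinal.mk_eq_aleph0 (M n)
      _ = ℵ₀ ^ ℵ₀ := by simp [Cardinal.prod_const, Cardinal.mk_nat]
      _ = 𝔠 := Cardinal.aleph0_power_aleph0
  · -- lower bound: inject `ℕ → Bool`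
    have heq : ∀ n, Nonempty (M n ≃ ℕ) := fun n => by
      have := hcount n; have := hinf n
      exact ⟨(nonempty_equiv_of_countable).some⟩
    let e : ∀ n, M n ≃ ℕ := fun n => (heq n).some
    let f : (ℕ → Bool) → ∀ n, M n := fun x n =>
      (e n).symm (Encodable.encode (List.ofFn fun i : Fin n => x i))
    have hinj : Function.Injective fun x : ℕ → Bool =>
        (Quotient.mk (Filter.productSetoid (U : Filter ℕ) M) (f x) : (U : Filter ℕ).Product M) := by
      intro x y hxy
      by_contra hne
      obtain ⟨k, hk⟩ : ∃ k, x k ≠ y k := by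
        by_contra h; push_neg at h; exact hne (funext h)
      have hmem : {n | f x n = f y n} ∈ U := Quotient.eq.mp hxy
      have hsub : {n | f x n = f y n} ⊆ {n | n ≤ k} := by
        intro n hn
        by_contra hnk
        have hkn : k < n := by simpa using hnk
        have h1 : (List.ofFn fun i : Fin n => x i) = List.ofFn fun i : Fin n => y i := by
          have := (e n).symm.injective hn
          exact Encodable.encode_injective this
        have h2 := congrArg (fun l => l[k]?) h1
        rw [List.getElem?_ofFn, List.getElem?_ofFn] at h2
        simp only [hkn, dif_pos] at h2
        exact hk (Option.some_injective _ h2)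
      have hfin : ({n | n ≤ k} : Set ℕ).Finite := Set.finite_le_nat k
      obtain ⟨a, _, ha⟩ := Ultrafilter.eq_pure_of_finite_mem (hfin.subset hsub) hmem
      exact hU a ha
    calc 𝔠 = #(ℕ → Bool) := by
          rw [Cardinal.mk_arrow]; simp [Cardinal.mk_bool, Cardinal.two_power_aleph0]
      _ ≤ #((U : Filter ℕ).Product M) := Cardinal.mk_le_of_injective hinj
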